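/- Let ≼ be an inclusion-monotone preorder on Finset α. Then every ≼-preferred repair of a finite set G (with respect to any consistency predicate C) is a subset repair of G, i.e., an inclusion-maximal consistent subset of G. -/
import Mathlib


/-- The strict part of a preference relation on finite databases. -/
def strictPart {α : Type*} [DecidableEq α] (r : Finset α → Finset α → Prop)
    (H H' : Finset α) : Prop :=
  r H H' ∧ ¬ r H' H

/-- `H` is a `r`-preferred repair of `G` with respect to consistency predicate `C`. -/
def PreferredRepair {α : Type*} [DecidableEq α] (r : Finset α → Finset α → Prop)
    (C : Finset α → Prop) (G H : Finset α) : Prop :=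
  C H ∧ H ⊆ G ∧ ¬ ∃ H'', H'' ⊆ G ∧ H'' ≠ H ∧ C H'' ∧ strictPart r H H''

/-- `H` is a subset repair of `G`: an inclusion-maximal consistent subset of `G`. -/
def SubsetRepair {α : Type*} [DecidableEq α] (C : Finset α → Prop)
    (G H : Finset α) : Prop :=
  C H ∧ H ⊆ G ∧ ¬ ∃ H'', C H'' ∧ H ⊂ H'' ∧ H'' ⊆ G

/-- A relation on finite sets is inclusion-monotone if strict inclusion implies
strict preference. -/
def InclMonotone {α : Type*} [DecidableEq α] (r : Finset α → Finset α → Prop) : Prop :=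
  ∀ H H' : Finset α, H ⊂ H' → strictPart r H H'

theorem preferred_repair_is_subset_repair
    {α : Type*} [DecidableEq α] (r : Finset α → Finset α → Prop)
    (hrefl : ∀ H, r H H)
    (htrans : ∀ H₁ H₂ H₃, r H₁ H₂ → r H₂ H₃ → r H₁ H₃)
    (hmono : InclMonotone r)
    (C : Finset α → Prop) (G H : Finset α)
    (h : PreferredRepair r C G H) :
    SubsetRepair C G H := by
  obtain ⟨hC, hHG, hno⟩ := h
  refine ⟨hC, hHG, ?_⟩
  rintro ⟨H'', hC'', hss, hsub⟩
  exact hno ⟨H'', hsub, (hss.ne).symm, hC'', hmono H H'' hss⟩
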